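/- Let G be an acyclic directed graph with distinguished nodes s and t, and let p_1 and p_2 be two simple s-t paths intersecting at the set of nodes I = {v_1, …, v_k}, enumerated in the order in which they occur on p_1. Then the recombined paths q_1 = p_1|_{s,v_1} ∘ p_2|_{v_1,v_2} ∘ ⋯ (alternating segments of p_1 and p_2 between consecutive intersection nodes, ending with the appropriate path's segment from v_k to t) and the analogously defined q_2 starting with p_2|_{s,v_1} are well-defined simple s-t paths. In particular, both p_1 and p_2 traverse the nodes of I in the same order. -/

import Mathlib

open MeasureTheory

/-- A network over time: a digraph with arc capacities `u`, costs `c`,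
transit times `τ`, a source `s` and a sink `t`. -/
structure Network (V : Type) (A : Type) where
  tail : A → V
  head : A → V
  u : A → ℕ
  c : A → ℕ
  τ : A → ℕ
  s : V
  t : V

namespace Network

variable {V A : Type}

/-- The node sequence visited by a list of arcs. -/
def nodes (N : Network V A) : List A → List V
  | [] => []
  | a :: rest => N.tail a :: ((a :: rest).map N.head)

/-- `p` is a simple `s`-`t` path (a non-empty list of consecutive arcs starting at
the source, ending at the sink and visiting pairwise distinct nodes). -/
def IsSTPath (N : Network V A) (p : List A) : Prop :=
  p ≠ [] ∧ List.Chain' (fun a b => N.head a = N.tail b) p ∧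
    (∀ a ∈ p.head?, N.tail a = N.s) ∧ (∀ a ∈ p.getLast?, N.head a = N.t) ∧
    (N.nodes p).Nodup

/-- `p` is a non-empty closed walk, i.e. a cycle. -/
def IsCycle (N : Network V A) (p : List A) : Prop :=
  p ≠ [] ∧ List.Chain' (fun a b => N.head a = N.tail b) p ∧
    ∀ a ∈ p.head?, ∀ b ∈ p.getLast?, N.head b = N.tail a

/-- The network contains no directed cycle. -/
def Acyclic (N : Network V A) : Prop := ∀ p : List A, ¬ N.IsCycle p

/-- Transit time (length) of a path. -/
def pathTime (N : Network V A) (p : List A) : ℕ := (p.map N.τ).sum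

/-- Bottleneck capacity of a path. -/
noncomputable def bottleneck (N : Network V A) (p : List A) : ℕ :=
  sInf (N.u '' {a | a ∈ p})

section
variable [DecidableEq A]

/-- Transit time of the part of `p` strictly before arc `a`. -/
def prefixTime (N : Network V A) (p : List A) (a : A) : ℕ :=
  ((p.takeWhile fun b => b ≠ a).map N.τ).sum

/-- Transit time of the part of `p` from arc `a` onwards. -/
def suffixTime (N : Network V A) (p : List A) (a : A) : ℕ :=
  ((p.dropWhile fun b => b ≠ a).map N.τ).sum

/-- Inflow rate into arc `a` at time `θ` of the temporally repeated flow with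
horizon `T` induced by the path decomposition `y`. -/
noncomputable def trRate (N : Network V A) (y : List A → ℝ) (T : ℝ) (a : A) (θ : ℝ) : ℝ :=
  ∑ᶠ p ∈ {p : List A | N.IsSTPath p ∧ (N.pathTime p : ℝ) ≤ T ∧ a ∈ p ∧
    (N.prefixTime p a : ℝ) ≤ θ ∧ (N.suffixTime p a : ℝ) < T - θ}, y p

/-- Static flow on arc `a` induced by the path decomposition `y`. -/
noncomputable def staticOf (N : Network V A) (y : List A → ℝ) (a : A) : ℝ :=
  ∑ᶠ p ∈ {p : List A | a ∈ p}, y p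

/-- `y` is a feasible (capacity-respecting) path decomposition of a static flow. -/
def IsDecomposition (N : Network V A) (y : List A → ℝ) : Prop :=
  (∀ p, 0 ≤ y p) ∧ (∀ p, y p ≠ 0 → N.IsSTPath p) ∧
    (Function.support y).Finite ∧ ∀ a : A, N.staticOf y a ≤ N.u a

/-- Value of the temporally repeated flow induced by `y` with horizon `T`. -/
noncomputable def trValue (N : Network V A) (y : List A → ℝ) (T : ℝ) : ℝ :=
  ∑ᶠ p ∈ {p : List A | N.IsSTPath p ∧ (N.pathTime p : ℝ) ≤ T}, y p * (T - N.pathTime p)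

/-- Amount of flow of the TR flow induced by `y` that has reached the sink by time `θ`. -/
noncomputable def arrTR (N : Network V A) (y : List A → ℝ) (θ : ℝ) : ℝ :=
  ∑ᶠ p ∈ {p : List A | N.IsSTPath p ∧ (N.pathTime p : ℝ) ≤ θ}, y p * (θ - N.pathTime p)

end

/-- All flow rates of the decomposition are (nonnegative) integers. -/
def IsIntegral (y : List A → ℝ) : Prop := ∀ p, ∃ n : ℕ, y p = n

section
variable [Fintype A]

/-- Cost of a flow over time `f` at time point `θ`. -/
noncomputable def costAt (N : Network V A) (f : A → ℝ → ℝ) (θ : ℝ) : ℝ :=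
  ∑ a : A, (N.c a : ℝ) * ∫ ξ in (θ - (N.τ a : ℝ))..θ, f a ξ

/-- Peak cost of a flow over time `f` with horizon `T`. -/
noncomputable def peakCost (N : Network V A) (f : A → ℝ → ℝ) (T : ℝ) : ℝ :=
  sSup (N.costAt f '' Set.Ico 0 T)

/-- Peak cost of the TR flow induced by the decomposition `y`. -/
noncomputable def trPeakCost [DecidableEq A] (N : Network V A) (y : List A → ℝ) (T : ℝ) : ℝ :=
  N.peakCost (N.trRate y T) T

variable [DecidableEq V]

/-- Cumulative flow having entered node `v` by time `θ`. -/
noncomputable def inflowBy (N : Network V A) (f : A → ℝ → ℝ) (v : V) (θ : ℝ) : ℝ :=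
  ∑ a ∈ Finset.univ.filter (fun a => N.head a = v), ∫ ξ in (0:ℝ)..(θ - (N.τ a : ℝ)), f a ξ

/-- Cumulative flow having left node `v` by time `θ`. -/
noncomputable def outflowBy (N : Network V A) (f : A → ℝ → ℝ) (v : V) (θ : ℝ) : ℝ :=
  ∑ a ∈ Finset.univ.filter (fun a => N.tail a = v), ∫ ξ in (0:ℝ)..θ, f a ξ

/-- A feasible flow over time with horizon `T`. -/
def IsFlowOverTime (N : Network V A) (T : ℝ) (f : A → ℝ → ℝ) : Prop :=
  (∀ a, Measurable (f a)) ∧ (∀ a θ, 0 ≤ f a θ) ∧ (∀ a θ, f a θ ≤ N.u a) ∧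
    (∀ a θ, T - (N.τ a : ℝ) < θ → f a θ = 0) ∧ (∀ a θ, θ < 0 → f a θ = 0) ∧
    ∀ v, v ≠ N.s → v ≠ N.t → ∀ θ ∈ Set.Ico (0:ℝ) T,
      N.outflowBy f v θ ≤ N.inflowBy f v θ

/-- Value of a flow over time with horizon `T`. -/
noncomputable def fotValue (N : Network V A) (T : ℝ) (f : A → ℝ → ℝ) : ℝ :=
  N.outflowBy f N.s T - N.inflowBy f N.s T

/-- Amount of flow of a flow over time arrived at the sink by time `θ`. -/
noncomputable def arrivedBy (N : Network V A) (f : A → ℝ → ℝ) (θ : ℝ) : ℝ :=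
  N.inflowBy f N.t θ - N.outflowBy f N.t θ

/-- Feasibility of a static `s`-`t` flow. -/
def IsStaticFlow (N : Network V A) (x : A → ℝ) : Prop :=
  (∀ a, 0 ≤ x a) ∧ (∀ a, x a ≤ N.u a) ∧
    ∀ v, v ≠ N.s → v ≠ N.t →
      ∑ a ∈ Finset.univ.filter (fun a => N.head a = v), x a =
      ∑ a ∈ Finset.univ.filter (fun a => N.tail a = v), x a

/-- Value of a static `s`-`t` flow. -/
noncomputable def staticValue (N : Network V A) (x : A → ℝ) : ℝ :=
  ∑ a ∈ Finset.univ.filter (fun a => N.tail a = N.s), x a -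
  ∑ a ∈ Finset.univ.filter (fun a => N.head a = N.s), x a

end

end Network

namespace Network

variable {V A : Type}

/-- The subpath of `p` from node `v` to node `w` (assuming `v` occurs before `w`
on `p`): the arcs of `p` starting at the first arc whose tail is `v` and stopping
just before the first subsequent arc whose tail is `w`. -/
def segment [DecidableEq V] (N : Network V A) (p : List A) (v w : V) : List A :=
  (p.dropWhile fun a => N.tail a ≠ v).takeWhile fun a => N.tail a ≠ w

/-- Alternating concatenation of segments of `p₁` and `p₂`, switching paths at each
waypoint of the given list, starting at node `cur` on `p₁` if `b = true`
(on `p₂` otherwise) and ending at the sink. -/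
def altConcat [DecidableEq V] (N : Network V A) (p₁ p₂ : List A) :
    List V → V → Bool → List A
  | [], cur, b => N.segment (if b then p₁ else p₂) cur N.t
  | v :: vs, cur, b =>
      N.segment (if b then p₁ else p₂) cur v ++ N.altConcat p₁ p₂ vs v (!b)

/-- `q` and `qh` are the two paths recombined from `p₁` and `p₂`: for the list `vs`
of all common nodes of `p₁` and `p₂`, enumerated in the order of occurrence on `p₁`,
they are obtained by alternately concatenating the segments of `p₁` and `p₂` between
consecutive common nodes (one of them starting with `p₁`'s initial segment, the
other with `p₂`'s). -/
def IsRecombination [DecidableEq V] (N : Network V A) (p₁ p₂ q qh : List A) : Prop :=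
  ∃ vs : List V, vs.Sublist (N.nodes p₁) ∧
    (∀ v, v ∈ vs ↔ v ∈ N.nodes p₁ ∧ v ∈ N.nodes p₂) ∧
    ((q = N.altConcat p₁ p₂ vs N.s true ∧ qh = N.altConcat p₁ p₂ vs N.s false) ∨
     (q = N.altConcat p₁ p₂ vs N.s false ∧ qh = N.altConcat p₁ p₂ vs N.s true))

end Network
open List

section ListAux
variable {α : Type*}

lemma aux_dropWhile_append_of_forall {q : α → Bool} {l₁ l₂ : List α}
    (h : ∀ x ∈ l₁, q x = true) :
    (l₁ ++ l₂).dropWhile q = l₂.dropWhile q := by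
  rw [List.dropWhile_append]
  simp [List.dropWhile_eq_nil_iff.2 h]

lemma aux_append_cons_eq {l₁ l₂ M : List α} {c v : α}
    (h : l₁ ++ v :: l₂ = c :: v :: M) (hv : v ∉ l₁) (hcv : c ≠ v) :
    l₁ = [c] ∧ l₂ = M := by
  match l₁, h with
  | [], h => simp at h; exact absurd h.1.symm hcv
  | [x], h => simp_all
  | x :: y :: l₁', h =>
    simp at h
    obtain ⟨rfl, rfl, -⟩ := h
    simp at hv

lemma aux_sublist_eq_of_mem_iff {l : List α} (hl : l.Nodup) :
    ∀ {l₁ l₂ : List α}, l₁ <+ l → l₂ <+ l → (∀ x, x ∈ l₁ ↔ x ∈ l₂) → l₁ = l₂ := by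
  induction l with
  | nil => intro l₁ l₂ h₁ h₂ _
           rw [List.sublist_nil.1 h₁, List.sublist_nil.1 h₂]
  | cons a l ih =>
    intro l₁ l₂ h₁ h₂ hm
    have hal : a ∉ l := (List.nodup_cons.1 hl).1
    have hl' : l.Nodup := (List.nodup_cons.1 hl).2
    rcases List.sublist_cons_iff.1 h₁ with h₁' | ⟨r₁, rfl, h₁'⟩ <;>
      rcases List.sublist_cons_iff.1 h₂ with h₂' | ⟨r₂, rfl, h₂'⟩
    · exact ih hl' h₁' h₂' hm
    · exact absurd (h₁'.subset ((hm a).2 (by simp))) hal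
    · exact absurd (h₂'.subset ((hm a).1 (by simp))) hal
    · have : r₁ = r₂ := by
        refine ih hl' h₁' h₂' fun x => ⟨fun hx => ?_, fun hx => ?_⟩
        · have hxa : x ≠ a := fun h => hal (h ▸ h₁'.subset hx)
          have := (hm x).1 (by simp [hx])
          simpa [hxa] using this
        · have hxa : x ≠ a := fun h => hal (h ▸ h₂'.subset hx)
          have := (hm x).2 (by simp [hx])
          simpa [hxa] using this
      rw [this]

lemma aux_eq_of_pairwise {r : α → α → Prop} (hasym : ∀ a b, r a b → r b a → False) :
    ∀ (l₁ l₂ : List α), l₁.Pairwise r → l₂.Pairwise r → (∀ x, x ∈ l₁ ↔ x ∈ l₂) → l₁ = l₂ := by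
  intro l₁
  induction l₁ with
  | nil =>
    intro l₂ _ _ hm
    exact (List.eq_nil_iff_forall_not_mem.2 fun x hx => by simpa using (hm x).2 hx).symm
  | cons a l₁' ih =>
    intro l₂ hp₁ hp₂ hm
    obtain ⟨b, l₂', rfl⟩ : ∃ b l₂', l₂ = b :: l₂' := by
      cases l₂ with
      | nil => simpa using (hm a).1 (by simp)
      | cons b l₂' => exact ⟨b, l₂', rfl⟩
    have hba : b = a := by
      by_contra hba
      have ha2 : a ∈ l₂' := by
        have := (hm a).1 (by simp); simpa [Ne.symm hba] using this
      have hb1 : b ∈ l₁' := by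
        have := (hm b).2 (by simp); simpa [hba] using this
      exact hasym a b ((List.pairwise_cons.1 hp₁).1 b hb1) ((List.pairwise_cons.1 hp₂).1 a ha2)
    subst hba
    have : l₁' = l₂' := by
      refine ih l₂' (List.pairwise_cons.1 hp₁).2 (List.pairwise_cons.1 hp₂).2 fun x => ⟨fun hx => ?_, fun hx => ?_⟩
      · have hxa : x ≠ b := fun h =>
          hasym x x (h ▸ (List.pairwise_cons.1 hp₁).1 x hx) (h ▸ (List.pairwise_cons.1 hp₁).1 x hx)
        have := (hm x).1 (by simp [hx]); simpa [hxa] using this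
      · have hxa : x ≠ b := fun h =>
          hasym x x (h ▸ (List.pairwise_cons.1 hp₂).1 x hx) (h ▸ (List.pairwise_cons.1 hp₂).1 x hx)
        have := (hm x).2 (by simp [hx]); simpa [hxa] using this
    rw [this]

lemma aux_pairwise_indexOf [DecidableEq α] :
    ∀ (l : List α), l.Nodup → l.Pairwise (fun v w => l.idxOf v < l.idxOf w) := by
  intro l
  induction l with
  | nil => simp
  | cons a l ih =>
    intro hl
    have hal : a ∉ l := (List.nodup_cons.1 hl).1
    refine List.pairwise_cons.2 ⟨fun y hy => ?_, ?_⟩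
    · have hya : y ≠ a := fun h => hal (h ▸ hy)
      rw [List.idxOf_cons_self, List.idxOf_cons_ne _ (Ne.symm hya)]
      exact Nat.succ_pos _
    · refine (ih (List.nodup_cons.1 hl).2).imp_of_mem fun {x y} hx hy h => ?_
      have hxa : x ≠ a := fun h' => hal (h' ▸ hx)
      have hya : y ≠ a := fun h' => hal (h' ▸ hy)
      rw [List.idxOf_cons_ne _ (Ne.symm hxa), List.idxOf_cons_ne _ (Ne.symm hya)]
      exact Nat.succ_lt_succ h

end ListAux
namespace Network
open List

variable {V A : Type} [DecidableEq V] [DecidableEq A] (N : Network V A)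

/-- The suffix of the arc list `p` starting at the first arc whose tail is `v`. -/
def suffFrom (p : List A) (v : V) : List A := p.dropWhile fun a => N.tail a ≠ v

lemma segment_eq (p : List A) (v w : V) :
    N.segment p v w = (N.suffFrom p v).takeWhile fun a => N.tail a ≠ w := rfl

/-- `p` is a nonempty walk ending at the sink, with pairwise distinct nodes. -/
structure IsWalkToT (N : Network V A) (p : List A) : Prop where
  ne : p ≠ []
  chain : List.Chain' (fun a b => N.head a = N.tail b) p
  last : ∀ a ∈ p.getLast?, N.head a = N.t
  nodup : (N.nodes p).Nodup

lemma IsSTPath.toWalk {p : List A} (h : N.IsSTPath p) : N.IsWalkToT p :=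
  ⟨h.1, h.2.1, h.2.2.2.1, h.2.2.2.2⟩

lemma nodes_cons_cons (a b : A) (l : List A) (h : N.head a = N.tail b) :
    N.nodes (a :: b :: l) = N.tail a :: N.nodes (b :: l) := by
  simp [nodes, h]

lemma nodes_cons' {a : A} {l : List A} (hl : l ≠ [])
    (hc : List.Chain' (fun a b => N.head a = N.tail b) (a :: l)) :
    N.nodes (a :: l) = N.tail a :: N.nodes l := by
  obtain ⟨b, l', rfl⟩ := List.exists_cons_of_ne_nil hl
  exact N.nodes_cons_cons a b l' (List.isChain_cons_cons.1 hc).1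

lemma nodes_append : ∀ {xs ys : List A}, ys ≠ [] →
    List.Chain' (fun a b => N.head a = N.tail b) (xs ++ ys) →
    N.nodes (xs ++ ys) = xs.map N.tail ++ N.nodes ys
  | [], ys, _, _ => by simp
  | a :: xs, ys, hys, hc => by
    have h1 : xs ++ ys ≠ [] := by simp [hys]
    rw [List.cons_append] at hc
    rw [List.cons_append, N.nodes_cons' h1 hc, nodes_append hys hc.tail]
    simp

lemma nodes_eq_map_tail : ∀ {p : List A}, p ≠ [] →
    List.Chain' (fun a b => N.head a = N.tail b) p →
    ∀ (h : p ≠ []), N.nodes p = p.map N.tail ++ [N.head (p.getLast h)]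
  | [], h, _, _ => absurd rfl h
  | [a], _, _, _ => by simp [nodes]
  | a :: b :: l, _, hc, _ => by
    rw [N.nodes_cons_cons a b l (List.isChain_cons_cons.1 hc).1,
      nodes_eq_map_tail (by simp) (List.isChain_cons_cons.1 hc).2 (by simp)]
    simp

lemma IsWalkToT.nodes_eq {p : List A} (h : N.IsWalkToT p) :
    N.nodes p = p.map N.tail ++ [N.t] := by
  rw [N.nodes_eq_map_tail h.ne h.chain h.ne, h.last _ (List.getLast?_eq_getLast h.ne)]

lemma IsWalkToT.tails_nodup {p : List A} (h : N.IsWalkToT p) : (p.map N.tail).Nodup := by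
  have := h.nodup
  rw [h.nodes_eq] at this
  exact (List.nodup_append.1 this).1

lemma IsWalkToT.t_not_tail {p : List A} (h : N.IsWalkToT p) : N.t ∉ p.map N.tail := by
  have := h.nodup
  rw [h.nodes_eq] at this
  intro hmem
  exact (List.nodup_append.1 this).2.2 _ hmem _ (by simp) rfl

lemma IsWalkToT.t_mem_nodes {p : List A} (h : N.IsWalkToT p) : N.t ∈ N.nodes p := by
  rw [h.nodes_eq]; simp

end Network
namespace Network
open List

variable {V A : Type} [DecidableEq V] [DecidableEq A] (N : Network V A)

lemma suffFrom_suffix (p : List A) (v : V) : N.suffFrom p v <:+ p :=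
  List.dropWhile_suffix _

lemma decomp_suffFrom (p : List A) (v : V) :
    p = (p.takeWhile fun a => N.tail a ≠ v) ++ N.suffFrom p v :=
  (List.takeWhile_append_dropWhile).symm

lemma head_suffFrom {p : List A} {v : V} (hS : N.suffFrom p v ≠ []) :
    N.tail ((N.suffFrom p v).head hS) = v := by
  have := List.head_dropWhile_not (fun a => decide (N.tail a ≠ v)) hS
  simpa [suffFrom] using this

lemma suffFrom_ne_nil {p : List A} {v : V} (hv : v ∈ p.map N.tail) :
    N.suffFrom p v ≠ [] := by
  intro h
  obtain ⟨a, ha, rfl⟩ := List.mem_map.1 hv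
  have := List.dropWhile_eq_nil_iff.1 h a ha
  simp at this

lemma getLast?_of_suffix {l p : List A} (h : l <:+ p) (hl : l ≠ []) :
    l.getLast? = p.getLast? := by
  obtain ⟨pre, rfl⟩ := h
  rw [List.getLast?_append, List.getLast?_eq_getLast hl]
  rfl

lemma IsWalkToT.suffix {p l : List A} (h : N.IsWalkToT p) (hs : l <:+ p) (hl : l ≠ []) :
    N.IsWalkToT l := by
  obtain ⟨pre, hpre⟩ := hs
  refine ⟨hl, h.chain.infix ⟨pre, [], by simp [hpre]⟩, ?_, ?_⟩
  · intro a ha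
    refine h.last a ?_
    rw [← getLast?_of_suffix ⟨pre, hpre⟩ hl]
    exact ha
  · have hnd := h.nodup
    rw [← hpre] at hnd
    rw [N.nodes_append hl (hpre ▸ h.chain)] at hnd
    exact (List.nodup_append.1 hnd).2.1

lemma IsWalkToT.suffFrom_walk {p : List A} (h : N.IsWalkToT p) {v : V}
    (hS : N.suffFrom p v ≠ []) : N.IsWalkToT (N.suffFrom p v) :=
  h.suffix N (N.suffFrom_suffix p v) hS

lemma nodes_suffFrom_decomp {p : List A} (h : N.IsWalkToT p) {v : V}
    (hS : N.suffFrom p v ≠ []) :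
    N.nodes p = ((p.takeWhile fun a => N.tail a ≠ v).map N.tail) ++ N.nodes (N.suffFrom p v) := by
  conv_lhs => rw [N.decomp_suffFrom p v]
  exact N.nodes_append hS (N.decomp_suffFrom p v ▸ h.chain)

lemma mem_nodes_of_mem_suffFrom {p : List A} (h : N.IsWalkToT p) {v : V} {x : V}
    (hx : x ∈ N.nodes (N.suffFrom p v)) : x ∈ N.nodes p := by
  rcases eq_or_ne (N.suffFrom p v) [] with hS | hS
  · rw [hS] at hx; simp [nodes] at hx
  · rw [N.nodes_suffFrom_decomp h hS]
    exact List.mem_append_right _ hx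

lemma suffFrom_t_nil {p : List A} (h : N.IsWalkToT p) : N.suffFrom p N.t = [] := by
  refine List.dropWhile_eq_nil_iff.2 fun x hx => ?_
  simp only [ne_eq, decide_eq_true_eq]
  intro heq
  exact h.t_not_tail N (List.mem_map.2 ⟨x, hx, heq⟩)

lemma segment_to_t {p : List A} (h : N.IsWalkToT p) (v : V) :
    N.segment p v N.t = N.suffFrom p v := by
  rw [N.segment_eq]
  refine List.takeWhile_eq_self_iff.2 fun x hx => ?_
  simp only [ne_eq, decide_eq_true_eq]
  intro heq
  exact h.t_not_tail N
    (List.mem_map.2 ⟨x, (N.suffFrom_suffix p v).subset hx, heq⟩)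

lemma suffFrom_head_self {p : List A} (hne : p ≠ []) {v : V}
    (hv : N.tail (p.head hne) = v) : N.suffFrom p v = p := by
  obtain ⟨a, l, rfl⟩ := List.exists_cons_of_ne_nil hne
  simp only [List.head_cons] at hv
  simp [suffFrom, List.dropWhile_cons, hv]

lemma suffFrom_restart {p : List A} (h : N.IsWalkToT p) {v w : V}
    (hw : w ∈ (N.suffFrom p v).map N.tail) :
    N.suffFrom p w = (N.suffFrom p v).dropWhile fun a => N.tail a ≠ w := by
  have hnotK : ∀ x ∈ p.takeWhile fun a => N.tail a ≠ v, N.tail x ≠ w := by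
    intro x hx heq
    have hnd := h.tails_nodup N
    rw [N.decomp_suffFrom p v, List.map_append] at hnd
    exact (List.disjoint_of_nodup_append hnd)
      (heq ▸ List.mem_map.2 ⟨x, hx, rfl⟩) hw
  have : N.suffFrom p w
      = ((p.takeWhile fun a => N.tail a ≠ v) ++ N.suffFrom p v).dropWhile
          fun a => N.tail a ≠ w := by
    rw [← N.decomp_suffFrom p v]; rfl
  rw [this, aux_dropWhile_append_of_forall]
  intro x hx
  simpa using hnotK x hx

lemma segStep {p : List A} (h : N.IsWalkToT p) {v w : V} (hS : N.suffFrom p v ≠ [])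
    (hw : w ∈ (N.suffFrom p v).map N.tail)
    (hvw : N.tail ((N.suffFrom p v).head hS) ≠ w) :
    N.segment p v w ≠ [] ∧
    (N.segment p v w).head? = (N.suffFrom p v).head? ∧
    List.Chain' (fun a b => N.head a = N.tail b) (N.segment p v w) ∧
    (∀ a ∈ (N.segment p v w).getLast?, N.head a = w) ∧
    N.suffFrom p v = N.segment p v w ++ N.suffFrom p w ∧
    N.suffFrom p w ≠ [] ∧
    (∀ x ∈ (N.segment p v w).map N.tail, x ≠ w) := by
  have hR : N.suffFrom p w = (N.suffFrom p v).dropWhile fun a => N.tail a ≠ w :=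
    N.suffFrom_restart h hw
  have hRne : N.suffFrom p w ≠ [] := by
    rw [hR]
    intro hnil
    obtain ⟨a, ha, rfl⟩ := List.mem_map.1 hw
    have := List.dropWhile_eq_nil_iff.1 hnil a ha
    simp at this
  have hdecomp : N.suffFrom p v = N.segment p v w ++ N.suffFrom p w := by
    rw [hR, N.segment_eq]
    exact (List.takeWhile_append_dropWhile).symm
  obtain ⟨s₀, S', hS0⟩ := List.exists_cons_of_ne_nil hS
  have hhd : (N.suffFrom p v).head hS = s₀ := by
    have h1 : (N.suffFrom p v).head? = some s₀ := by rw [hS0]; rfl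
    have h2 : (N.suffFrom p v).head? = some ((N.suffFrom p v).head hS) :=
      List.head?_eq_head hS
    exact (Option.some.inj (h2.symm.trans h1))
  have hs0 : N.tail s₀ ≠ w := hhd ▸ hvw
  have hseg_cons : N.segment p v w = s₀ :: S'.takeWhile fun a => N.tail a ≠ w := by
    rw [N.segment_eq, hS0, List.takeWhile_cons]
    simp [hs0]
  have hsegne : N.segment p v w ≠ [] := by rw [hseg_cons]; simp
  have hhead : (N.segment p v w).head? = (N.suffFrom p v).head? := by
    rw [hseg_cons, hS0]; rfl
  have hchainS : List.Chain' (fun a b => N.head a = N.tail b) (N.suffFrom p v) :=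
    (h.suffFrom_walk N hS).chain
  have hchain : List.Chain' (fun a b => N.head a = N.tail b) (N.segment p v w) := by
    rw [hdecomp] at hchainS
    exact (List.isChain_append.1 hchainS).1
  have htailR : N.tail ((N.suffFrom p w).head hRne) = w := N.head_suffFrom hRne
  have hlast : ∀ a ∈ (N.segment p v w).getLast?, N.head a = w := by
    intro a ha
    rw [hdecomp] at hchainS
    have := (List.isChain_append.1 hchainS).2.2 a ha ((N.suffFrom p w).head hRne)
      (List.head?_eq_head hRne)
    rw [this, htailR]
  have htails : ∀ x ∈ (N.segment p v w).map N.tail, x ≠ w := by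
    intro x hx
    obtain ⟨a, ha, rfl⟩ := List.mem_map.1 hx
    rw [N.segment_eq] at ha
    have := List.mem_takeWhile_imp ha
    simpa using this
  exact ⟨hsegne, hhead, hchain, hlast, hdecomp, hRne, htails⟩

end Network
namespace Network
open List

variable {V A : Type} [DecidableEq V] [DecidableEq A] (N : Network V A)

lemma nodes_head_eq {p : List A} (hne : p ≠ []) :
    N.nodes p = N.tail (p.head hne) :: p.map N.head := by
  obtain ⟨a, l, rfl⟩ := List.exists_cons_of_ne_nil hne
  simp [nodes]

lemma mem_nodes_suffFrom_of_indexOf_lt {p : List A} (h : N.IsWalkToT p) {v w : V}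
    (hw : w ∈ N.nodes p)
    (hlt : (N.nodes p).idxOf v < (N.nodes p).idxOf w) :
    w ∈ N.nodes (N.suffFrom p v) := by
  by_cases hv : v ∈ p.map N.tail
  · have hS : N.suffFrom p v ≠ [] := N.suffFrom_ne_nil hv
    have hdec := N.nodes_suffFrom_decomp h hS
    have hvK : v ∉ (p.takeWhile fun a => N.tail a ≠ v).map N.tail := by
      intro hmem
      obtain ⟨a, ha, rfl⟩ := List.mem_map.1 hmem
      have := List.mem_takeWhile_imp ha
      simp at this
    have hheadS : N.nodes (N.suffFrom p v)
        = v :: (N.suffFrom p v).map N.head := by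
      rw [N.nodes_head_eq hS, N.head_suffFrom hS]
    have hidxv : (N.nodes p).idxOf v = ((p.takeWhile fun a => N.tail a ≠ v).map N.tail).length := by
      rw [hdec, List.idxOf_append_of_notMem hvK, hheadS, List.idxOf_cons_self]
      simp
    by_contra hwS
    have hwK : w ∈ (p.takeWhile fun a => N.tail a ≠ v).map N.tail := by
      rw [hdec] at hw
      rcases List.mem_append.1 hw with h' | h'
      · exact h'
      · exact absurd h' hwS
    have : (N.nodes p).idxOf w < (N.nodes p).idxOf v := by
      rw [hidxv]
      conv_lhs => rw [hdec]
      rw [List.idxOf_append_of_mem hwK]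
      exact List.idxOf_lt_length_iff.2 hwK
    omega
  · exfalso
    have hvt : v = N.t ∨ v ∉ N.nodes p := by
      by_cases hvp : v ∈ N.nodes p
      · rw [h.nodes_eq] at hvp
        rcases List.mem_append.1 hvp with h' | h'
        · exact absurd h' hv
        · left; simpa using h'
      · right; exact hvp
    rcases hvt with rfl | hvp
    · have hidxt : (N.nodes p).idxOf N.t = (p.map N.tail).length := by
        rw [h.nodes_eq, List.idxOf_append_of_notMem (h.t_not_tail N), List.idxOf_cons_self]
        simp
      have hwlen : (N.nodes p).idxOf w < (N.nodes p).length := List.idxOf_lt_length_iff.2 hw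
      have : (N.nodes p).length = (p.map N.tail).length + 1 := by rw [h.nodes_eq]; simp
      omega
    · have : (N.nodes p).idxOf v = (N.nodes p).length := by
        exact List.idxOf_eq_length_iff.2 hvp
      have hwlen : (N.nodes p).idxOf w < (N.nodes p).length := List.idxOf_lt_length_iff.2 hw
      omega

lemma ordering_agrees {p₁ p₂ : List A} (hacyc : N.Acyclic)
    (h₁ : N.IsWalkToT p₁) (h₂ : N.IsWalkToT p₂) {a b : V}
    (ha₁ : a ∈ N.nodes p₁) (hb₁ : b ∈ N.nodes p₁)
    (ha₂ : a ∈ N.nodes p₂) (hb₂ : b ∈ N.nodes p₂)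
    (h12 : (N.nodes p₂).idxOf a < (N.nodes p₂).idxOf b) :
    (N.nodes p₁).idxOf a < (N.nodes p₁).idxOf b := by
  by_contra hle
  have hab : a ≠ b := by
    intro hEq; rw [hEq] at h12; omega
  have hlt : (N.nodes p₁).idxOf b < (N.nodes p₁).idxOf a := by
    rcases Nat.lt_or_ge ((N.nodes p₁).idxOf b) ((N.nodes p₁).idxOf a) with h' | h'
    · exact h'
    · exfalso
      rcases Nat.eq_or_lt_of_le h' with h'' | h''
      · exact hab ((List.idxOf_inj ha₁).1 h'')
      · exact hle h''
  have haS₁ : a ∈ N.nodes (N.suffFrom p₁ b) := N.mem_nodes_suffFrom_of_indexOf_lt h₁ ha₁ hlt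
  have hbS₂ : b ∈ N.nodes (N.suffFrom p₂ a) := N.mem_nodes_suffFrom_of_indexOf_lt h₂ hb₂ h12
  -- b ≠ t and a ≠ t
  have hbt : b ≠ N.t := by
    intro hEq; rw [hEq, N.suffFrom_t_nil h₁] at haS₁; simp [nodes] at haS₁
  have hat : a ≠ N.t := by
    intro hEq; rw [hEq, N.suffFrom_t_nil h₂] at hbS₂; simp [nodes] at hbS₂
  have hb_tail : b ∈ p₁.map N.tail := by
    rw [h₁.nodes_eq] at hb₁
    rcases List.mem_append.1 hb₁ with h' | h'
    · exact h'
    · exact absurd (by simpa using h') hbt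
  have ha_tail : a ∈ p₂.map N.tail := by
    rw [h₂.nodes_eq] at ha₂
    rcases List.mem_append.1 ha₂ with h' | h'
    · exact h'
    · exact absurd (by simpa using h') hat
  have hS₁ : N.suffFrom p₁ b ≠ [] := N.suffFrom_ne_nil hb_tail
  have hS₂ : N.suffFrom p₂ a ≠ [] := N.suffFrom_ne_nil ha_tail
  have haS₁' : a ∈ (N.suffFrom p₁ b).map N.tail := by
    rw [(h₁.suffFrom_walk N hS₁).nodes_eq] at haS₁
    rcases List.mem_append.1 haS₁ with h' | h'
    · exact h'
    · exact absurd (by simpa using h') hat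
  have hbS₂' : b ∈ (N.suffFrom p₂ a).map N.tail := by
    rw [(h₂.suffFrom_walk N hS₂).nodes_eq] at hbS₂
    rcases List.mem_append.1 hbS₂ with h' | h'
    · exact h'
    · exact absurd (by simpa using h') hbt
  have hvw₁ : N.tail ((N.suffFrom p₁ b).head hS₁) ≠ a := by
    rw [N.head_suffFrom hS₁]; exact Ne.symm hab
  have hvw₂ : N.tail ((N.suffFrom p₂ a).head hS₂) ≠ b := by
    rw [N.head_suffFrom hS₂]; exact hab
  obtain ⟨hne₁, hhd₁, hch₁, hlast₁, -, -, -⟩ := N.segStep h₁ hS₁ haS₁' hvw₁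
  obtain ⟨hne₂, hhd₂, hch₂, hlast₂, -, -, -⟩ := N.segStep h₂ hS₂ hbS₂' hvw₂
  refine hacyc (N.segment p₁ b a ++ N.segment p₂ a b) ⟨by simp [hne₁], ?_, ?_⟩
  · refine List.isChain_append.2 ⟨hch₁, hch₂, fun x hx y hy => ?_⟩
    have hheadseg₂ : N.tail y = a := by
      rw [hhd₂, List.head?_eq_head hS₂] at hy
      rw [← Option.some.inj hy, N.head_suffFrom hS₂]
    rw [hlast₁ x hx, hheadseg₂]
  · intro x hx y hy
    rw [List.head?_append, Option.or_of_isSome (by simp [List.head?_eq_head, List.isSome_head?, hne₁])] at hx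
    rw [List.getLast?_append, Option.or_of_isSome (by simp [List.getLast?_isSome, hne₂])] at hy
    have hxtail : N.tail x = b := by
      rw [hhd₁, List.head?_eq_head hS₁] at hx
      rw [← Option.some.inj hx, N.head_suffFrom hS₁]
    rw [hlast₂ y hy, hxtail]

lemma altConcat_swap (p q : List A) :
    ∀ (ws : List V) (cur : V) (b : Bool),
      N.altConcat p q ws cur b = N.altConcat q p ws cur (!b)
  | [], cur, b => by cases b <;> simp [altConcat]
  | v :: ws, cur, b => by
    cases b <;> simp [altConcat, altConcat_swap p q ws v]

end Network
namespace Network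
open List

variable {V A : Type} [DecidableEq V] [DecidableEq A] (N : Network V A)

lemma key : ∀ (ws : List V) (p q : List A) (cur : V)
    (hp : N.IsWalkToT p) (hq : N.IsWalkToT q) (C : V → Bool)
    (_hC : ∀ x, C x = true ↔ (x ∈ N.nodes p ∧ x ∈ N.nodes q))
    (_hnt : ∀ x ∈ cur :: ws, x ≠ N.t)
    (_hinvp : (N.nodes (N.suffFrom p cur)).filter C = cur :: (ws ++ [N.t]))
    (_hinvq : (N.nodes (N.suffFrom q cur)).filter C = cur :: (ws ++ [N.t])),
    N.altConcat p q (ws ++ [N.t]) cur true ≠ [] ∧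
    List.Chain' (fun a b => N.head a = N.tail b) (N.altConcat p q (ws ++ [N.t]) cur true) ∧
    (∀ a ∈ (N.altConcat p q (ws ++ [N.t]) cur true).head?, N.tail a = cur) ∧
    (∀ a ∈ (N.altConcat p q (ws ++ [N.t]) cur true).getLast?, N.head a = N.t) ∧
    (N.nodes (N.altConcat p q (ws ++ [N.t]) cur true)).Nodup ∧
    (∀ x ∈ N.nodes (N.altConcat p q (ws ++ [N.t]) cur true),
      x ∈ N.nodes (N.suffFrom p cur) ∨ x ∈ N.nodes (N.suffFrom q cur))
  | [], p, q, cur, hp, hq, C, _hC, _hnt, hinvp, _hinvq => by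
    have hS : N.suffFrom p cur ≠ [] := by
      intro hnil
      rw [hnil] at hinvp
      simp [nodes] at hinvp
    have hL : N.altConcat p q ([] ++ [N.t]) cur true = N.suffFrom p cur := by
      show N.segment p cur N.t ++ N.segment q N.t N.t = _
      rw [N.segment_to_t hp, N.segment_eq, N.suffFrom_t_nil hq]
      simp
    have W := hp.suffFrom_walk N (v := cur) hS
    rw [hL]
    refine ⟨hS, W.chain, ?_, W.last, W.nodup, fun x hx => Or.inl hx⟩
    intro a ha
    rw [List.head?_eq_head hS] at ha
    rw [← Option.some.inj ha]
    exact N.head_suffFrom hS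
  | v :: ws', p, q, cur, hp, hq, C, hC, hnt, hinvp, hinvq => by
    -- nonemptiness of the two suffixes
    have hS₁ : N.suffFrom p cur ≠ [] := by
      intro hnil; rw [hnil] at hinvp; simp [nodes] at hinvp
    have hS₂ : N.suffFrom q cur ≠ [] := by
      intro hnil; rw [hnil] at hinvq; simp [nodes] at hinvq
    have W₁ := hp.suffFrom_walk N (v := cur) hS₁
    have W₂ := hq.suffFrom_walk N (v := cur) hS₂
    -- basic membership facts
    have hnodupR : (cur :: ((v :: ws') ++ [N.t])).Nodup := by
      rw [← hinvp]; exact W₁.nodup.filter C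
    have hcur_not : cur ∉ v :: (ws' ++ [N.t]) := (List.nodup_cons.1 hnodupR).1
    have hcurv : cur ≠ v := fun h => hcur_not (h ▸ List.mem_cons_self)
    have hv_not : v ∉ ws' ++ [N.t] :=
      (List.nodup_cons.1 ((List.nodup_cons.1 hnodupR).2)).1
    have hvt : v ≠ N.t := hnt v (by simp)
    have hCcur : C cur = true := by
      have : cur ∈ (N.nodes (N.suffFrom p cur)).filter C := by rw [hinvp]; simp
      exact (List.mem_filter.1 this).2
    have hCv : C v = true := by
      have : v ∈ (N.nodes (N.suffFrom p cur)).filter C := by rw [hinvp]; simp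
      exact (List.mem_filter.1 this).2
    have hvS₁ : v ∈ N.nodes (N.suffFrom p cur) := by
      have : v ∈ (N.nodes (N.suffFrom p cur)).filter C := by rw [hinvp]; simp
      exact (List.mem_filter.1 this).1
    have hvS₂ : v ∈ N.nodes (N.suffFrom q cur) := by
      have : v ∈ (N.nodes (N.suffFrom q cur)).filter C := by rw [hinvq]; simp
      exact (List.mem_filter.1 this).1
    have hv₁ : v ∈ (N.suffFrom p cur).map N.tail := by
      rw [W₁.nodes_eq] at hvS₁
      rcases List.mem_append.1 hvS₁ with h' | h'
      · exact h'
      · exact absurd (by simpa using h') hvt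
    have hv₂ : v ∈ (N.suffFrom q cur).map N.tail := by
      rw [W₂.nodes_eq] at hvS₂
      rcases List.mem_append.1 hvS₂ with h' | h'
      · exact h'
      · exact absurd (by simpa using h') hvt
    have hvw₁ : N.tail ((N.suffFrom p cur).head hS₁) ≠ v := by
      rw [N.head_suffFrom hS₁]; exact hcurv
    have hvw₂ : N.tail ((N.suffFrom q cur).head hS₂) ≠ v := by
      rw [N.head_suffFrom hS₂]; exact hcurv
    obtain ⟨hne₁, hhd₁, hch₁, hlast₁, hdecomp₁, hR₁ne, htails₁⟩ := N.segStep hp hS₁ hv₁ hvw₁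
    obtain ⟨hne₂, hhd₂, hch₂, hlast₂, hdecomp₂, hR₂ne, htails₂⟩ := N.segStep hq hS₂ hv₂ hvw₂
    -- node list decompositions
    have hnodesS₁ : N.nodes (N.suffFrom p cur)
        = (N.segment p cur v).map N.tail ++ N.nodes (N.suffFrom p v) := by
      conv_lhs => rw [hdecomp₁]
      exact N.nodes_append hR₁ne (hdecomp₁ ▸ W₁.chain)
    have hnodesS₂ : N.nodes (N.suffFrom q cur)
        = (N.segment q cur v).map N.tail ++ N.nodes (N.suffFrom q v) := by
      conv_lhs => rw [hdecomp₂]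
      exact N.nodes_append hR₂ne (hdecomp₂ ▸ W₂.chain)
    -- filter invariants for the next step
    have e2p : (N.nodes (N.suffFrom p v)).filter C
        = v :: ((N.suffFrom p v).map N.head).filter C := by
      rw [N.nodes_head_eq hR₁ne, N.head_suffFrom hR₁ne, List.filter_cons_of_pos hCv]
    have e2q : (N.nodes (N.suffFrom q v)).filter C
        = v :: ((N.suffFrom q v).map N.head).filter C := by
      rw [N.nodes_head_eq hR₂ne, N.head_suffFrom hR₂ne, List.filter_cons_of_pos hCv]
    have e3p : ((N.segment p cur v).map N.tail).filter C
        ++ v :: ((N.suffFrom p v).map N.head).filter C = cur :: v :: (ws' ++ [N.t]) := by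
      rw [← e2p, ← List.filter_append, ← hnodesS₁, hinvp]; rfl
    have e3q : ((N.segment q cur v).map N.tail).filter C
        ++ v :: ((N.suffFrom q v).map N.head).filter C = cur :: v :: (ws' ++ [N.t]) := by
      rw [← e2q, ← List.filter_append, ← hnodesS₂, hinvq]; rfl
    have hvnotseg₁ : v ∉ ((N.segment p cur v).map N.tail).filter C := by
      intro hmem
      exact htails₁ v (List.mem_filter.1 hmem).1 rfl
    have hvnotseg₂ : v ∉ ((N.segment q cur v).map N.tail).filter C := by
      intro hmem
      exact htails₂ v (List.mem_filter.1 hmem).1 rfl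
    obtain ⟨hl₁p, hl₂p⟩ := aux_append_cons_eq e3p hvnotseg₁ hcurv
    obtain ⟨hl₁q, hl₂q⟩ := aux_append_cons_eq e3q hvnotseg₂ hcurv
    have hinvp' : (N.nodes (N.suffFrom p v)).filter C = v :: (ws' ++ [N.t]) := by
      rw [e2p, hl₂p]
    have hinvq' : (N.nodes (N.suffFrom q v)).filter C = v :: (ws' ++ [N.t]) := by
      rw [e2q, hl₂q]
    -- induction hypothesis, on the swapped pair
    obtain ⟨ihne, ihch, ihhd, ihlast, ihnd, ihsub⟩ :=
      key ws' q p v hq hp C (fun x => (hC x).trans and_comm)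
        (fun x hx => hnt x (List.mem_cons_of_mem _ hx)) hinvq' hinvp'
    -- unfold the goal
    have hL : N.altConcat p q ((v :: ws') ++ [N.t]) cur true
        = N.segment p cur v ++ N.altConcat q p (ws' ++ [N.t]) v true := by
      rw [List.cons_append]
      show N.segment p cur v ++ N.altConcat p q (ws' ++ [N.t]) v false = _
      rw [N.altConcat_swap p q (ws' ++ [N.t]) v false]
      rfl
    rw [hL]
    have hLne : N.altConcat q p (ws' ++ [N.t]) v true ≠ [] := ihne
    have hchain : List.Chain' (fun a b => N.head a = N.tail b)
        (N.segment p cur v ++ N.altConcat q p (ws' ++ [N.t]) v true) := by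
      refine List.isChain_append.2 ⟨hch₁, ihch, fun x hx y hy => ?_⟩
      rw [hlast₁ x hx, ihhd y hy]
    have hnodesL : N.nodes (N.segment p cur v ++ N.altConcat q p (ws' ++ [N.t]) v true)
        = (N.segment p cur v).map N.tail ++ N.nodes (N.altConcat q p (ws' ++ [N.t]) v true) :=
      N.nodes_append hLne hchain
    have hsegsub₁ : ∀ x ∈ (N.segment p cur v).map N.tail, x ∈ N.nodes (N.suffFrom p cur) := by
      intro x hx
      rw [hnodesS₁]
      exact List.mem_append_left _ hx
    refine ⟨by simp [hne₁], hchain, ?_, ?_, ?_, ?_⟩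
    · intro a ha
      rw [List.head?_append, Option.or_of_isSome (by simp [List.isSome_head?, hne₁])] at ha
      rw [hhd₁, List.head?_eq_head hS₁] at ha
      rw [← Option.some.inj ha]
      exact N.head_suffFrom hS₁
    · intro a ha
      rw [List.getLast?_append, Option.or_of_isSome (by simp [List.getLast?_isSome, hLne])] at ha
      exact ihlast a ha
    · rw [hnodesL]
      refine List.nodup_append'.2 ⟨?_, ihnd, ?_⟩
      · refine List.Nodup.sublist ?_ (hp.tails_nodup N)
        exact List.Sublist.map N.tail
          (((List.takeWhile_prefix _).sublist).trans ((N.suffFrom_suffix p cur).sublist))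
      · intro x hx hx'
        rcases ihsub x hx' with hxq | hxp
        · -- x lies on q after v; x is a common node, hence x = cur, contradiction
          have hxC : C x = true := by
            refine (hC x).2 ⟨?_, ?_⟩
            · exact N.mem_nodes_of_mem_suffFrom hp (hsegsub₁ x hx)
            · exact N.mem_nodes_of_mem_suffFrom hq hxq
          have : x ∈ ((N.segment p cur v).map N.tail).filter C :=
            List.mem_filter.2 ⟨hx, hxC⟩
          rw [hl₁p] at this
          have hxcur : x = cur := by simpa using this
          subst hxcur
          have : x ∈ (N.nodes (N.suffFrom q v)).filter C :=
            List.mem_filter.2 ⟨hxq, hxC⟩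
          rw [hinvq'] at this
          exact hcur_not this
        · -- x lies on p after v; contradicts nodup of nodes of suffFrom p cur
          have hnd := W₁.nodup
          rw [hnodesS₁] at hnd
          exact (List.disjoint_of_nodup_append hnd) hx hxp
    · intro x hx
      rw [hnodesL] at hx
      rcases List.mem_append.1 hx with hx | hx
      · exact Or.inl (hsegsub₁ x hx)
      · rcases ihsub x hx with hxq | hxp
        · refine Or.inr ?_
          rw [hnodesS₂]
          exact List.mem_append_right _ hxq
        · refine Or.inl ?_
          rw [hnodesS₁]
          exact List.mem_append_right _ hxp

end Network
open Network List

/-- Lemma 4.8: in an acyclic digraph, for two simple `s`-`t` paths `p₁`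
and `p₂` whose set of common nodes is `I`, enumerated as the list `vs` in the order
of occurrence on `p₁`, the two recombined paths (alternating the segments of `p₁`
and `p₂` between consecutive nodes of `I`, starting with `p₁` resp. with `p₂`) are
well-defined simple `s`-`t` paths; in particular `p₂` traverses the nodes of `I`
in the same order as `p₁`. -/
theorem stmt8 {V A : Type} [DecidableEq V] [DecidableEq A]
    (N : Network V A) (hacyc : N.Acyclic)
    (p₁ p₂ : List A) (h₁ : N.IsSTPath p₁) (h₂ : N.IsSTPath p₂)
    (vs : List V) (horder : vs.Sublist (N.nodes p₁))
    (hI : ∀ v, v ∈ vs ↔ v ∈ N.nodes p₁ ∧ v ∈ N.nodes p₂) :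
    N.IsSTPath (N.altConcat p₁ p₂ vs N.s true) ∧
    N.IsSTPath (N.altConcat p₁ p₂ vs N.s false) ∧
    vs.Sublist (N.nodes p₂) := by
  classical
  obtain ⟨hne₁, hc₁, hs₁, ht₁, hnd₁⟩ := h₁
  obtain ⟨hne₂, hc₂, hs₂, ht₂, hnd₂⟩ := h₂
  have W₁ : N.IsWalkToT p₁ := ⟨hne₁, hc₁, ht₁, hnd₁⟩
  have W₂ : N.IsWalkToT p₂ := ⟨hne₂, hc₂, ht₂, hnd₂⟩
  set C : V → Bool := fun v => decide (v ∈ N.nodes p₁) && decide (v ∈ N.nodes p₂) with hCdef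
  have hC : ∀ x, C x = true ↔ (x ∈ N.nodes p₁ ∧ x ∈ N.nodes p₂) := by
    intro x; simp [hCdef]
  have hvs : vs = (N.nodes p₁).filter C := by
    refine aux_sublist_eq_of_mem_iff hnd₁ horder (List.filter_sublist) fun x => ?_
    rw [hI x, List.mem_filter, hC x]
    tauto
  have hhead₁ : N.tail (p₁.head hne₁) = N.s := hs₁ _ (List.head?_eq_head hne₁)
  have hhead₂ : N.tail (p₂.head hne₂) = N.s := hs₂ _ (List.head?_eq_head hne₂)
  have hsuff₁ : N.suffFrom p₁ N.s = p₁ := N.suffFrom_head_self hne₁ hhead₁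
  have hsuff₂ : N.suffFrom p₂ N.s = p₂ := N.suffFrom_head_self hne₂ hhead₂
  have hsmem₁ : N.s ∈ N.nodes p₁ := by
    rw [N.nodes_head_eq hne₁, hhead₁]; exact List.mem_cons_self
  have hsmem₂ : N.s ∈ N.nodes p₂ := by
    rw [N.nodes_head_eq hne₂, hhead₂]; exact List.mem_cons_self
  have hCs : C N.s = true := (hC _).2 ⟨hsmem₁, hsmem₂⟩
  have hCt : C N.t = true := (hC _).2 ⟨W₁.t_mem_nodes N, W₂.t_mem_nodes N⟩
  -- shape of vs
  obtain ⟨a₁, l₁, rfl⟩ := List.exists_cons_of_ne_nil hne₁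
  have hta₁ : N.tail a₁ = N.s := by simpa using hhead₁
  set ws : List V := (l₁.map N.tail).filter C with hwsdef
  have hvs_shape : vs = N.s :: (ws ++ [N.t]) := by
    rw [hvs, W₁.nodes_eq, List.filter_append, List.map_cons, hta₁,
      List.filter_cons_of_pos hCs]
    simp [hwsdef, hCt]
  have hvs_nodup : vs.Nodup := hvs ▸ hnd₁.filter C
  have hnt : ∀ x ∈ N.s :: ws, x ≠ N.t := by
    intro x hx hEq
    rw [hvs_shape] at hvs_nodup
    have : (N.s :: ws) ++ [N.t] = N.s :: (ws ++ [N.t]) := by simp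
    rw [← this] at hvs_nodup
    exact (List.disjoint_of_nodup_append hvs_nodup) hx (by simp [hEq])
  -- p₂ visits the common nodes in the same order
  have hperm : ∀ x, x ∈ (N.nodes p₂).filter C ↔ x ∈ vs := by
    intro x; rw [hvs, List.mem_filter, List.mem_filter, hC x]; tauto
  have hf₂ : (N.nodes p₂).filter C = vs := by
    refine aux_eq_of_pairwise
      (r := fun v w => (N.nodes (a₁ :: l₁)).idxOf v < (N.nodes (a₁ :: l₁)).idxOf w)
      (fun a b hab hba => by omega) _ _ ?_ ?_ hperm
    · refine (List.Pairwise.sublist (List.filter_sublist)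
        (aux_pairwise_indexOf _ hnd₂)).imp_of_mem ?_
      intro a b ha hb hr
      have ha' := List.mem_filter.1 ha
      have hb' := List.mem_filter.1 hb
      exact N.ordering_agrees hacyc W₁ W₂ ((hC a).1 ha'.2).1 ((hC b).1 hb'.2).1
        ha'.1 hb'.1 hr
    · exact hvs ▸ List.Pairwise.sublist (List.filter_sublist)
        (aux_pairwise_indexOf _ hnd₁)
  -- the two invariants at the source
  have hinv₁ : (N.nodes (N.suffFrom (a₁ :: l₁) N.s)).filter C = N.s :: (ws ++ [N.t]) := by
    rw [hsuff₁, ← hvs, hvs_shape]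
  have hinv₂ : (N.nodes (N.suffFrom p₂ N.s)).filter C = N.s :: (ws ++ [N.t]) := by
    rw [hsuff₂, hf₂, hvs_shape]
  obtain ⟨k₁ne, k₁ch, k₁hd, k₁la, k₁nd, -⟩ :=
    N.key ws (a₁ :: l₁) p₂ N.s W₁ W₂ C hC hnt hinv₁ hinv₂
  obtain ⟨k₂ne, k₂ch, k₂hd, k₂la, k₂nd, -⟩ :=
    N.key ws p₂ (a₁ :: l₁) N.s W₂ W₁ C (fun x => (hC x).trans and_comm) hnt hinv₂ hinv₁
  -- unfold the first segment (which is empty)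
  have hsegss₁ : N.segment (a₁ :: l₁) N.s N.s = [] := by
    rw [N.segment_eq, hsuff₁, List.takeWhile_cons]
    simp [hta₁]
  have hsegss₂ : N.segment p₂ N.s N.s = [] := by
    obtain ⟨a₂, l₂, hp₂⟩ := List.exists_cons_of_ne_nil hne₂
    have hta₂ : N.tail a₂ = N.s := hs₂ a₂ (by rw [hp₂]; rfl)
    rw [N.segment_eq, hsuff₂, hp₂, List.takeWhile_cons]
    simp [hta₂]
  have hunf₁ : N.altConcat (a₁ :: l₁) p₂ (N.s :: (ws ++ [N.t])) N.s true
      = N.altConcat p₂ (a₁ :: l₁) (ws ++ [N.t]) N.s true := by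
    show N.segment (a₁ :: l₁) N.s N.s
        ++ N.altConcat (a₁ :: l₁) p₂ (ws ++ [N.t]) N.s false = _
    rw [hsegss₁, List.nil_append, N.altConcat_swap (a₁ :: l₁) p₂ (ws ++ [N.t]) N.s false]
    rfl
  have hunf₂ : N.altConcat (a₁ :: l₁) p₂ (N.s :: (ws ++ [N.t])) N.s false
      = N.altConcat (a₁ :: l₁) p₂ (ws ++ [N.t]) N.s true := by
    show N.segment p₂ N.s N.s
        ++ N.altConcat (a₁ :: l₁) p₂ (ws ++ [N.t]) N.s true = _
    rw [hsegss₂, List.nil_append]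
  have hsub : vs <+ N.nodes p₂ := by
    rw [← hf₂]; exact List.filter_sublist
  rw [hvs_shape, hunf₁, hunf₂]
  exact ⟨⟨k₂ne, k₂ch, k₂hd, k₂la, k₂nd⟩, ⟨k₁ne, k₁ch, k₁hd, k₁la, k₁nd⟩, hvs_shape ▸ hsub⟩
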